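/- Let G be a finite group with a cyclic, index 2 subgroup. Then D(G) >= |G|/2 + |G'|, where G' = [G,G] is the commutator subgroup and D(G) is the large Davenport constant. -/

import Mathlib

/-- The set of products of a multiset `S` over `G`: all elements obtained by
multiplying the terms of `S` in some order. -/
def prodSet {G : Type*} [Group G] (S : Multiset G) : Set G :=
  {g | ∃ l : List G, (l : Multiset G) = S ∧ l.prod = g}

/-- `S` is a product-one sequence if its terms can be ordered with product `1`. -/
def IsProductOne {G : Type*} [Group G] (S : Multiset G) : Prop :=
  (1 : G) ∈ prodSet S

/-- `S` is product-one free if no nonempty sub-multiset is a product-one sequence. -/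
def ProductOneFree {G : Type*} [Group G] (S : Multiset G) : Prop :=
  ∀ T : Multiset G, T ≤ S → T ≠ 0 → ¬ IsProductOne T

/-- `S` is a minimal product-one sequence (an atom): a nonempty product-one sequence
that cannot be factored into two nonempty product-one sub-multisets. -/
def IsMinimalProductOne {G : Type*} [Group G] (S : Multiset G) : Prop :=
  S ≠ 0 ∧ IsProductOne S ∧
    ¬ ∃ T T' : Multiset G, S = T + T' ∧ T ≠ 0 ∧ T' ≠ 0 ∧ IsProductOne T ∧ IsProductOne T'

/-- The small Davenport constant: the supremum of lengths of product-one free sequences. -/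
noncomputable def smallDavenport (G : Type*) [Group G] : ℕ∞ :=
  sSup {n : ℕ∞ | ∃ S : Multiset G, ProductOneFree S ∧ (S.card : ℕ∞) = n}

/-- The large Davenport constant: the supremum of lengths of minimal product-one sequences. -/
noncomputable def largeDavenport (G : Type*) [Group G] : ℕ∞ :=
  sSup {n : ℕ∞ | ∃ S : Multiset G, IsMinimalProductOne S ∧ (S.card : ℕ∞) = n}

open Subgroup
open scoped Classical
open scoped commutatorElement

section Aux

variable {G : Type*} [Group G]

lemma aux_coe_split (p q : List G) (x : G) :
    (↑(p ++ x :: q) : Multiset G) = x ::ₘ (↑(p ++ q) : Multiset G) := by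
  simp [Multiset.add_cons]

lemma aux_prod_of_coe_replicate {g : G} {j : ℕ} (l : List G)
    (h : (l : Multiset G) = Multiset.replicate j g) : l.prod = g ^ j := by
  rw [← Multiset.coe_replicate, Multiset.coe_eq_coe, List.perm_replicate] at h
  rw [h, List.prod_replicate]

lemma aux_prod_mem_iff_even {H : Subgroup G} (h2 : H.index = 2)
    (l : List G) : l.prod ∈ H ↔ Even (l.countP (fun x => decide (x ∉ H))) := by
  induction l with
  | nil => simp [one_mem]
  | cons x l ih =>
    rw [List.prod_cons, Subgroup.mul_mem_iff_of_index_two h2, ih, List.countP_cons]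
    by_cases hx : x ∈ H <;> simp [hx, Nat.even_add_one]

lemma aux_three_replicates {g : G} {j : ℕ} {u v w : List G}
    (h : (↑(u ++ v ++ w) : Multiset G) = Multiset.replicate j g) :
    u = List.replicate u.length g ∧ v = List.replicate v.length g ∧
      w = List.replicate w.length g ∧ u.length + v.length + w.length = j := by
  have hmem : ∀ b ∈ u ++ v ++ w, b = g := fun b hb =>
    Multiset.eq_of_mem_replicate (h ▸ (Multiset.mem_coe.2 hb))
  have hlen : u.length + v.length + w.length = j := by
    have := congrArg Multiset.card h
    simp at this; omega
  exact ⟨List.eq_replicate_iff.2 ⟨rfl, fun b hb => hmem b (by simp [hb])⟩,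
    List.eq_replicate_iff.2 ⟨rfl, fun b hb => hmem b (by simp [hb])⟩,
    List.eq_replicate_iff.2 ⟨rfl, fun b hb => hmem b (by simp [hb])⟩, hlen⟩

/-- Any ordering of `α ::ₘ β ::ₘ g^[j]` has one of two product shapes. -/
lemma aux_prod_structure (α β g : G) (j : ℕ) (l : List G)
    (h : (l : Multiset G) = α ::ₘ β ::ₘ Multiset.replicate j g) :
    ∃ i₁ i₂ i₃, i₁ + i₂ + i₃ = j ∧
      (l.prod = g ^ i₁ * α * g ^ i₂ * β * g ^ i₃ ∨
       l.prod = g ^ i₁ * β * g ^ i₂ * α * g ^ i₃) := by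
  have hαl : α ∈ l := by
    rw [← Multiset.mem_coe, h]; exact Multiset.mem_cons_self _ _
  obtain ⟨p, q, rfl⟩ := List.append_of_mem hαl
  rw [aux_coe_split] at h
  have hpq : (↑(p ++ q) : Multiset G) = β ::ₘ Multiset.replicate j g :=
    (Multiset.cons_inj_right α).1 h
  have hβ : β ∈ p ++ q := by
    rw [← Multiset.mem_coe, hpq]; exact Multiset.mem_cons_self _ _
  rw [List.mem_append] at hβ
  rcases hβ with hβ | hβ
  · obtain ⟨p₁, p₂, rfl⟩ := List.append_of_mem hβ
    have h2 : (↑((p₁ ++ β :: p₂) ++ q) : Multiset G)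
        = β ::ₘ (↑(p₁ ++ p₂ ++ q) : Multiset G) := by
      rw [Multiset.cons_coe, Multiset.coe_eq_coe]
      simp
    rw [h2] at hpq
    have hrep := (Multiset.cons_inj_right β).1 hpq
    obtain ⟨e1, e2, e3, hlen⟩ := aux_three_replicates hrep
    refine ⟨p₁.length, p₂.length, q.length, hlen, Or.inr ?_⟩
    conv_lhs => rw [e1, e2, e3]
    simp [List.prod_append, List.prod_replicate, mul_assoc]
  · obtain ⟨q₁, q₂, rfl⟩ := List.append_of_mem hβ
    have h2 : (↑(p ++ (q₁ ++ β :: q₂)) : Multiset G)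
        = β ::ₘ (↑(p ++ q₁ ++ q₂) : Multiset G) := by
      rw [Multiset.cons_coe, Multiset.coe_eq_coe]
      rw [show p ++ (q₁ ++ β :: q₂) = (p ++ q₁) ++ β :: q₂ by simp]
      exact List.perm_middle
    rw [h2] at hpq
    have hrep := (Multiset.cons_inj_right β).1 hpq
    obtain ⟨e1, e2, e3, hlen⟩ := aux_three_replicates hrep
    refine ⟨p.length, q₁.length, q₂.length, hlen, Or.inl ?_⟩
    conv_lhs => rw [e1, e2, e3]
    simp [List.prod_append, List.prod_replicate, mul_assoc]

end Aux

/-- If a finite group `G` has a cyclic, index `2` subgroup, then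
`D(G) ≥ |G|/2 + |G'|`. -/
theorem largeDavenport_lower_bound (G : Type*) [Group G] [Finite G]
    (h : ∃ H : Subgroup G, IsCyclic H ∧ H.index = 2) :
    ((Nat.card G / 2 + Nat.card (commutator G) : ℕ) : ℕ∞) ≤ largeDavenport G := by
  obtain ⟨H, hc, h2⟩ := h
  -- generator of H
  obtain ⟨⟨g, hgH⟩, hgen⟩ := hc.exists_generator
  have hHg : Subgroup.zpowers g = H := by
    apply le_antisymm (zpowers_le.2 hgH)
    intro x hx
    obtain ⟨k, hk⟩ := hgen ⟨x, hx⟩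
    exact ⟨k, congrArg Subtype.val hk⟩
  -- α outside H
  have hne : H ≠ ⊤ := fun h => by simp [h, Subgroup.index_top] at h2
  obtain ⟨α, hα⟩ : ∃ α, α ∉ H := by
    by_contra hall
    push_neg at hall
    exact hne ((Subgroup.eq_top_iff' H).2 hall)
  set n := orderOf g with hn
  have hnpos : 0 < n := orderOf_pos g
  haveI : NeZero n := ⟨hnpos.ne'⟩
  have hcardH : Nat.card H = n := by rw [← hHg, Nat.card_zpowers]
  have hcardG : Nat.card G = 2 * n := by
    rw [← H.card_mul_index, hcardH, h2, mul_comm]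
  have hαinv : α⁻¹ ∉ H := fun hh => hα (by simpa using H.inv_mem hh)
  -- conjugation
  have hconjmem : α * g * α⁻¹ ∈ H := by
    have h1 : α * g ∉ H := by
      rw [Subgroup.mul_mem_iff_of_index_two h2]; tauto
    rw [Subgroup.mul_mem_iff_of_index_two h2]; tauto
  obtain ⟨z, hz⟩ : ∃ z : ℤ, g ^ z = α * g * α⁻¹ := by
    rw [← hHg] at hconjmem; exact hconjmem
  obtain ⟨u, hu⟩ : ∃ u : ℕ, α * g * α⁻¹ = g ^ (u + 1) := by
    refine ⟨(z % (n:ℤ)).toNat + n - 1, ?_⟩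
    have hmod : g ^ (z % (n:ℤ)).toNat = g ^ z := by
      rw [← zpow_natCast, Int.toNat_of_nonneg (Int.emod_nonneg z (by exact_mod_cast hnpos.ne')),
        zpow_mod_orderOf]
    have : (z % (n:ℤ)).toNat + n - 1 + 1 = (z % (n:ℤ)).toNat + n := by omega
    rw [this, pow_add, pow_orderOf_eq_one, mul_one, hmod, hz]
  clear hz
  -- α² ∈ H and commutes with g
  have hα2 : α * α ∈ H := Subgroup.mul_self_mem_of_index_two h2 α
  obtain ⟨c, hc'⟩ : ∃ c : ℤ, g ^ c = α * α := by rw [← hHg] at hα2; exact hα2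
  have hsq : g ^ ((u + 1) * (u + 1)) = g := by
    have h1 : α * g ^ (u+1) * α⁻¹ = g ^ ((u+1)*(u+1)) := by
      rw [← conj_pow, hu, ← pow_mul]
    have h2' : α * (α * g * α⁻¹) * α⁻¹ = g := by
      have : α * (α * g * α⁻¹) * α⁻¹ = (α * α) * g * (α * α)⁻¹ := by group
      rw [this, ← hc']
      have hcomm : Commute (g ^ c) g := (Commute.refl g).zpow_left c
      rw [mul_inv_eq_iff_eq_mul, hcomm.eq]
    rw [← h1, ← hu, h2']
  have hconj' : α⁻¹ * g * α = g ^ (u + 1) := by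
    have : α * g ^ (u+1) * α⁻¹ = g := by rw [← conj_pow, hu, ← pow_mul, hsq]
    calc α⁻¹ * g * α = α⁻¹ * (α * g ^ (u+1) * α⁻¹) * α := by rw [this]
      _ = g ^ (u + 1) := by group
  -- conjugation formulas with integer exponents
  have hconjz : ∀ i : ℤ, α * g ^ i * α⁻¹ = g ^ (((u:ℤ) + 1) * i) := by
    intro i
    rw [← conj_zpow, hu, ← zpow_natCast g (u+1), ← zpow_mul]
    norm_num
  -- commutator subgroup
  have hK : commutator G = Subgroup.zpowers (g ^ u) := by
    apply le_antisymm
    · rw [commutator_def, Subgroup.commutator_le]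
      intro p _ q _
      have hdec : ∀ x : G, (∃ i : ℤ, x = g ^ i) ∨ (∃ i : ℤ, x = g ^ i * α) := by
        intro x
        by_cases hx : x ∈ H
        · rw [← hHg] at hx; obtain ⟨i, hi⟩ := hx; exact Or.inl ⟨i, hi.symm⟩
        · have hxα : x * α⁻¹ ∈ H := by
            rw [Subgroup.mul_mem_iff_of_index_two h2]; tauto
          rw [← hHg] at hxα; obtain ⟨i, hi⟩ := hxα
          refine Or.inr ⟨i, ?_⟩
          have hi' : g ^ i = x * α⁻¹ := hi
          rw [hi']; group
      have hgu : ∀ w : ℤ, g ^ ((u:ℤ) * w) ∈ Subgroup.zpowers (g ^ u) := by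
        intro w
        have : g ^ ((u:ℤ) * w) = (g ^ u : G) ^ w := by
          rw [← zpow_natCast g u, ← zpow_mul]
        rw [this]
        exact Subgroup.zpow_mem _ (Subgroup.mem_zpowers _) w
      have case2 : ∀ i j : ℤ, ⁅g ^ i * α, g ^ j⁆ ∈ Subgroup.zpowers (g ^ u) := by
        intro i j
        have : ⁅g ^ i * α, g ^ j⁆ = g ^ ((u:ℤ) * j) := by
          rw [commutatorElement_def]
          have e1 : (g ^ i * α) * g ^ j * (g ^ i * α)⁻¹ * (g ^ j)⁻¹
              = g ^ i * (α * g ^ j * α⁻¹) * g ^ (-i) * g ^ (-j) := by group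
          rw [e1, hconjz]
          rw [← zpow_add, ← zpow_add, ← zpow_add]
          ring_nf
        rw [this]; exact hgu j
      rcases hdec p with ⟨i, rfl⟩ | ⟨i, rfl⟩ <;> rcases hdec q with ⟨j, rfl⟩ | ⟨j, rfl⟩
      · have : ⁅(g:G) ^ i, g ^ j⁆ = 1 := by
          rw [commutatorElement_def]; group
        rw [this]; exact Subgroup.one_mem _
      · rw [← commutatorElement_inv]
        exact Subgroup.inv_mem _ (case2 j i)
      · exact case2 i j
      · have : ⁅g ^ i * α, g ^ j * α⁆ = g ^ ((u:ℤ) * (j - i)) := by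
          have hab : (g ^ i * α) * (g ^ j * α) = g ^ (i + ((u:ℤ)+1) * j) * (α * α) := by
            have : (g ^ i * α) * (g ^ j * α) = g ^ i * (α * g ^ j * α⁻¹) * (α * α) := by group
            rw [this, hconjz, ← zpow_add]
          have hba : (g ^ j * α) * (g ^ i * α) = g ^ (j + ((u:ℤ)+1) * i) * (α * α) := by
            have : (g ^ j * α) * (g ^ i * α) = g ^ j * (α * g ^ i * α⁻¹) * (α * α) := by group
            rw [this, hconjz, ← zpow_add]
          have : ⁅g ^ i * α, g ^ j * α⁆
              = ((g ^ i * α) * (g ^ j * α)) * (((g ^ j * α) * (g ^ i * α)))⁻¹ := by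
            rw [commutatorElement_def]; group
          rw [this, hab, hba]
          calc g ^ (i + ((u:ℤ)+1) * j) * (α * α) * (g ^ (j + ((u:ℤ)+1) * i) * (α * α))⁻¹
              = g ^ (i + ((u:ℤ)+1) * j) * (g ^ (j + ((u:ℤ)+1) * i))⁻¹ := by group
            _ = g ^ ((u:ℤ) * (j - i)) := by rw [← zpow_neg, ← zpow_add]; ring_nf
        rw [this]; exact hgu (j - i)
    · rw [Subgroup.zpowers_le]
      have : g ^ u = ⁅α, g⁆ := by
        rw [commutatorElement_def, hu, pow_succ]
        group
      rw [this]
      exact commutator_mem_commutator (Subgroup.mem_top _) (Subgroup.mem_top _)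
  -- the order m of g^u
  set m := orderOf (g ^ u) with hm
  have hcardK : Nat.card (commutator G) = m := by rw [hK, Nat.card_zpowers]
  have hmpos : 0 < m := orderOf_pos _
  have hmdvd : m ∣ n := orderOf_pow_dvd u
  have hmn : m ≤ n := Nat.le_of_dvd hnpos hmdvd
  -- translation between powers of g and ZMod n
  have hone : ∀ e : ℕ, g ^ e = 1 ↔ (e : ZMod n) = 0 := by
    intro e
    rw [← orderOf_dvd_iff_pow_eq_one, ← hn, ZMod.natCast_eq_zero_iff]
  have hNz : ((n : ZMod n)) = 0 := ZMod.natCast_self n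
  have humz : ((u : ZMod n)) * (m : ZMod n) = 0 := by
    have h1 : g ^ (u * m) = 1 := by rw [pow_mul]; exact pow_orderOf_eq_one _
    have := (hone _).1 h1
    push_cast at this
    exact this
  have hs2q : ((u : ZMod n)) ^ 2 + 2 * (u : ZMod n) = 0 := by
    have h1 : ((u+1) * (u+1) : ℕ) ≡ 1 [MOD n] := by
      rw [← pow_eq_pow_iff_modEq (x := g)]
      · simpa [← hn, pow_one] using hsq
    have := (ZMod.natCast_eq_natCast_iff _ _ _).2 h1
    push_cast at this
    ring_nf
    ring_nf at this
    linear_combination this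
  have hneone : ∀ j : ℕ, 0 < j → j < m → ¬ ((u * j : ℕ) : ZMod n) = 0 := by
    intro j hj1 hj2 hz
    have : g ^ (u * j) = 1 := (hone _).2 hz
    rw [pow_mul] at this
    exact pow_ne_one_of_lt_orderOf hj1.ne' hj2 this
  -- the sequence
  set a := u + 2 + (n - m) with ha
  set β := α⁻¹ * g ^ a with hβdef
  have hβ : β ∉ H := by
    intro hh
    rw [hβdef] at hh
    have hga : g ^ a ∈ H := H.pow_mem hgH a
    have : α⁻¹ ∈ H := by
      have := H.mul_mem hh (H.inv_mem hga)
      simpa using this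
    exact hαinv this
  set L : List G := α :: (List.replicate (m-1) g ++ β :: List.replicate (n-1) g) with hL
  set S : Multiset G := (L : Multiset G) with hSdef
  have hScard : Multiset.card S = n + m := by
    rw [hSdef, Multiset.coe_card, hL]
    simp
    omega
  have hS : S = α ::ₘ β ::ₘ Multiset.replicate (m - 1 + (n - 1)) g := by
    rw [hSdef, hL]
    have : (↑(List.replicate (m-1) g ++ β :: List.replicate (n-1) g) : Multiset G)
        = β ::ₘ (↑(List.replicate (m-1) g ++ List.replicate (n-1) g) : Multiset G) :=
      aux_coe_split _ _ _
    rw [← Multiset.cons_coe, this]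
    congr 2
    rw [show (↑(List.replicate (m-1) g ++ List.replicate (n-1) g) : Multiset G)
        = ↑(List.replicate (m-1) g) + ↑(List.replicate (n-1) g) from (Multiset.coe_add _ _).symm,
      Multiset.coe_replicate, Multiset.coe_replicate, ← Multiset.replicate_add]
  have hk2 : m - 1 + (n - 1) = n + m - 2 := by omega
  -- exponent evaluation lemmas
  have hconjN : ∀ x : ℕ, α * g ^ x * α⁻¹ = g ^ ((u+1) * x) := by
    intro x
    rw [← conj_pow, hu, ← pow_mul]
  have hconjN' : ∀ x : ℕ, α⁻¹ * g ^ x * α = g ^ ((u+1) * x) := by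
    intro x
    have h0 : α⁻¹ * g ^ x * (α⁻¹)⁻¹ = (α⁻¹ * g * (α⁻¹)⁻¹) ^ x := (conj_pow).symm
    rw [inv_inv] at h0
    rw [h0, hconj', ← pow_mul]
  -- S is product-one
  have hSone : IsProductOne S := by
    refine ⟨L, hSdef.symm, ?_⟩
    rw [hL]
    simp only [List.prod_cons, List.prod_append, List.prod_replicate]
    have hstep : α * (g ^ (m-1) * (β * g ^ (n-1)))
        = g ^ ((u+1)*(m-1)) * g ^ a * g ^ (n-1) := by
      rw [hβdef, ← hconjN (m-1)]; group
    have hexp : α * (g ^ (m-1) * (β * g ^ (n-1))) = g ^ ((u+1)*(m-1) + a + (n-1)) := by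
      rw [pow_add g ((u+1)*(m-1) + a) (n-1), pow_add g ((u+1)*(m-1)) a, hstep]
    rw [hexp, hone]
    have hc1 : ((m - 1 : ℕ) : ZMod n) = (m : ZMod n) - 1 := by
      push_cast [Nat.cast_sub hmpos]; ring
    have hc2 : ((n - 1 : ℕ) : ZMod n) = (n : ZMod n) - 1 := by
      push_cast [Nat.cast_sub hnpos]; ring
    have hc3 : ((n - m : ℕ) : ZMod n) = (n : ZMod n) - m := by
      push_cast [Nat.cast_sub hmn]; ring
    push_cast [hc1, hc2, hc3, ha]
    linear_combination humz + 2 * hNz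
  -- minimality
  have hmin : IsMinimalProductOne S := by
    refine ⟨by rw [hS]; exact Multiset.cons_ne_zero, hSone, ?_⟩
    rintro ⟨T, T', hsplit, hT0, hT'0, hTone, hT'one⟩
    -- parity of outside-H elements
    have hEven : ∀ U : Multiset G, IsProductOne U →
        Even (Multiset.countP (fun x => x ∉ H) U) := by
      rintro U ⟨l, hl, hp⟩
      have h1 : l.prod ∈ H := by rw [hp]; exact H.one_mem
      rw [aux_prod_mem_iff_even h2] at h1
      rw [← hl, Multiset.coe_countP]
      exact h1
    have hcnt : Multiset.countP (fun x => x ∉ H) T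
        + Multiset.countP (fun x => x ∉ H) T' = 2 := by
      rw [← Multiset.countP_add, ← hsplit, hS]
      rw [Multiset.countP_cons, Multiset.countP_cons]
      have : Multiset.countP (fun x => x ∉ H) (Multiset.replicate (m - 1 + (n - 1)) g) = 0 := by
        rw [Multiset.countP_eq_zero]
        intro x hx
        rw [Multiset.eq_of_mem_replicate hx]
        simp [hgH]
      simp [this, hα, hβ]
    -- key: the part consisting only of elements of H leads to a contradiction
    have key : ∀ U V : Multiset G, S = U + V → V ≠ 0 → IsProductOne U → IsProductOne V →
        Multiset.countP (fun x => x ∉ H) V = 0 → False := by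
      intro U V hsp hV0 hUone hVone hVcnt
      -- V consists only of copies of g
      have hVH : ∀ x ∈ V, x ∈ H := by
        intro x hx
        by_contra hxH
        rw [Multiset.countP_eq_zero] at hVcnt
        exact (hVcnt x hx) hxH
      have hVle : V ≤ Multiset.replicate (m - 1 + (n - 1)) g := by
        refine Multiset.le_iff_count.2 (fun x => ?_)
        by_cases hx : x ∈ V
        · have hxH := hVH x hx
          have hxa : x ≠ α := fun e => hα (e ▸ hxH)
          have hxb : x ≠ β := fun e => hβ (e ▸ hxH)
          have hVS : V ≤ S := hsp ▸ Multiset.le_add_left _ _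
          calc Multiset.count x V ≤ Multiset.count x S := Multiset.count_le_of_le x hVS
            _ = Multiset.count x (Multiset.replicate (m - 1 + (n - 1)) g) := by
                rw [hS, Multiset.count_cons_of_ne hxa, Multiset.count_cons_of_ne hxb]
        · simp [Multiset.count_eq_zero_of_notMem hx]
      have hVrep : V = Multiset.replicate (Multiset.card V) g := by
        rw [Multiset.eq_replicate_card]
        intro b hb
        exact Multiset.eq_of_mem_replicate (Multiset.mem_of_le hVle hb)
      set j := Multiset.card V with hj
      have hjle : j ≤ m - 1 + (n - 1) := by
        have := Multiset.card_le_card hVle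
        simpa using this
      have hjpos : 0 < j := by
        rw [hj]
        exact Multiset.card_pos.2 hV0
      -- product of V is g ^ j
      have hgj : g ^ j = 1 := by
        obtain ⟨l, hl, hp⟩ := hVone
        rw [hVrep] at hl
        rw [← hp, aux_prod_of_coe_replicate l hl]
      have hndvd : n ∣ j := orderOf_dvd_of_pow_eq_one hgj
      have hjn : j = n ∧ 2 ≤ m := by
        obtain ⟨t, ht⟩ := hndvd
        rcases Nat.lt_or_ge t 2 with h' | h'
        · interval_cases t <;> omega
        · have h2t : n * 2 ≤ n * t := Nat.mul_le_mul_left n h'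
          omega
      obtain ⟨hjn', hm2⟩ := hjn
      -- U = α ::ₘ β ::ₘ g^[m-2]
      have hU : U = α ::ₘ β ::ₘ Multiset.replicate (m - 2) g := by
        have hrepsplit : Multiset.replicate (m - 1 + (n - 1)) g
            = Multiset.replicate (m - 2) g + Multiset.replicate n g := by
          rw [← Multiset.replicate_add]
          congr 1
          omega
        have hSsplit : S = (α ::ₘ β ::ₘ Multiset.replicate (m - 2) g) + Multiset.replicate n g := by
          rw [hS, hrepsplit, Multiset.cons_add, Multiset.cons_add]
        have h1 : U + Multiset.replicate n g
            = (α ::ₘ β ::ₘ Multiset.replicate (m - 2) g) + Multiset.replicate n g := by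
          rw [← hSsplit, hsp, hVrep, hjn']
        exact add_right_cancel h1
      -- analyze the product of U
      obtain ⟨l, hl, hp⟩ := hUone
      rw [hU] at hl
      obtain ⟨i₁, i₂, i₃, hsum, hform | hform⟩ := aux_prod_structure α β g (m-2) l hl
      · -- form 1 : g^i₁ * α * g^i₂ * β * g^i₃
        have hstep : g ^ i₁ * α * g ^ i₂ * β * g ^ i₃
            = g ^ i₁ * g ^ ((u+1) * i₂) * g ^ a * g ^ i₃ := by
          rw [hβdef, ← hconjN i₂]; group
        have hexp : g ^ (i₁ + (u+1) * i₂ + a + i₃) = 1 := by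
          rw [pow_add g (i₁ + (u+1) * i₂ + a) i₃, pow_add g (i₁ + (u+1) * i₂) a,
            pow_add g i₁ ((u+1) * i₂), ← hstep, ← hform, hp]
        rw [hone] at hexp
        refine hneone (1 + i₂) (by omega) (by omega) ?_
        have hrelc : ((i₁ : ZMod n)) + i₂ + i₃ = (m : ZMod n) - 2 := by
          have : ((i₁ + i₂ + i₃ : ℕ) : ZMod n) = ((m - 2 : ℕ) : ZMod n) := by rw [hsum]
          push_cast [Nat.cast_sub hm2] at this
          linear_combination this
        have hc3 : ((n - m : ℕ) : ZMod n) = (n : ZMod n) - m := by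
          push_cast [Nat.cast_sub hmn]; ring
        push_cast [ha, hc3] at hexp ⊢
        linear_combination hexp - hrelc - hNz
      · -- form 2 : g^i₁ * β * g^i₂ * α * g^i₃
        have hstep : g ^ i₁ * β * g ^ i₂ * α * g ^ i₃
            = g ^ i₁ * g ^ ((u+1) * (a + i₂)) * g ^ i₃ := by
          rw [hβdef, ← hconjN' (a + i₂), pow_add g a i₂]; group
        have hexp : g ^ (i₁ + (u+1) * (a + i₂) + i₃) = 1 := by
          rw [pow_add g (i₁ + (u+1) * (a + i₂)) i₃, pow_add g i₁ ((u+1) * (a + i₂)),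
            ← hstep, ← hform, hp]
        rw [hone] at hexp
        refine hneone (1 + i₂) (by omega) (by omega) ?_
        have hrelc : ((i₁ : ZMod n)) + i₂ + i₃ = (m : ZMod n) - 2 := by
          have : ((i₁ + i₂ + i₃ : ℕ) : ZMod n) = ((m - 2 : ℕ) : ZMod n) := by rw [hsum]
          push_cast [Nat.cast_sub hm2] at this
          linear_combination this
        have hc3 : ((n - m : ℕ) : ZMod n) = (n : ZMod n) - m := by
          push_cast [Nat.cast_sub hmn]; ring
        push_cast [ha, hc3] at hexp ⊢
        linear_combination hexp - hrelc - hs2q + humz - ((u : ZMod n) + 1) * hNz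
    -- apply the key lemma to whichever side avoids H entirely
    obtain ⟨x, hx⟩ := hEven T hTone
    obtain ⟨y, hy⟩ := hEven T' hT'one
    have : Multiset.countP (fun x => x ∉ H) T = 0
        ∨ Multiset.countP (fun x => x ∉ H) T' = 0 := by omega
    rcases this with h0 | h0
    · exact key T' T (by rw [hsplit, add_comm]) hT0 hT'one hTone h0
    · exact key T T' hsplit hT'0 hTone hT'one h0
  -- conclude
  have hfinal : ((n + m : ℕ) : ℕ∞) ≤ largeDavenport G := by
    apply le_sSup
    exact ⟨S, hmin, by rw [hScard]⟩
  have : Nat.card G / 2 + Nat.card (commutator G) = n + m := by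
    rw [hcardG, hcardK]
    omega
  rw [this]
  exact hfinal
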